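/- Let U be the Lucas sequence with parameters P, Q where Q = ±1. Then U is a strong divisibility sequence: for all positive integers a, b, gcd(|U_a|, |U_b|) = |U_{gcd(a,b)}|. -/

import Mathlib

private lemma igcd_add_mul (a b c : ℤ) : Int.gcd a (b + a * c) = Int.gcd a b := by
  apply Nat.dvd_antisymm
  · rw [← Int.natCast_dvd_natCast]
    refine Int.dvd_coe_gcd (Int.gcd_dvd_left _ _) ?_
    have h1 : (Int.gcd a (b + a * c) : ℤ) ∣ (b + a * c) := Int.gcd_dvd_right _ _
    have h2 : (Int.gcd a (b + a * c) : ℤ) ∣ a := Int.gcd_dvd_left _ _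
    simpa using dvd_sub h1 (Dvd.dvd.mul_right h2 c)
  · rw [← Int.natCast_dvd_natCast]
    refine Int.dvd_coe_gcd (Int.gcd_dvd_left _ _) ?_
    have h1 : (Int.gcd a b : ℤ) ∣ b := Int.gcd_dvd_right _ _
    have h2 : (Int.gcd a b : ℤ) ∣ a := Int.gcd_dvd_left _ _
    exact dvd_add h1 (Dvd.dvd.mul_right h2 c)

theorem lucas_strong_divisibility
    (P Q : ℤ) (hQ : Q = 1 ∨ Q = -1)
    (U : ℕ → ℤ) (h0 : U 0 = 0) (h1 : U 1 = 1)
    (hrec : ∀ n, U (n + 2) = P * U (n + 1) + Q * U n) :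
    ∀ a b : ℕ, 1 ≤ a → 1 ≤ b →
      Int.gcd (U a) (U b) = (U (Nat.gcd a b)).natAbs := by
  -- |Q*x| = |x|
  have habsQ : ∀ x : ℤ, (Q * x).natAbs = x.natAbs := by
    rcases hQ with h | h <;> simp [h]
  have hgcdQ : ∀ x y : ℤ, Int.gcd x (Q * y) = Int.gcd x y := by
    intro x y; rw [Int.gcd_def, Int.gcd_def, habsQ]
  -- addition identity
  have key : ∀ m n, U (m + n + 1) = U (m + 1) * U (n + 1) + Q * U m * U n := by
    intro m
    induction m using Nat.twoStepInduction with
    | zero => intro n; simp [h0, h1]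
    | one =>
      intro n
      have h2 : U 2 = P := by have := hrec 0; rw [h0, h1] at this; simpa using this
      have e : 1 + n + 1 = n + 2 := by ring
      rw [e, hrec n, h2, h1]; ring
    | more m ih1 ih2 =>
      intro n
      have e1 : m + 2 + n + 1 = (m + n + 1) + 2 := by ring
      have e2 : m + 1 + n + 1 = (m + n + 1) + 1 := by ring
      have hm3 : U (m + 3) = P * U (m + 2) + Q * U (m + 1) := hrec (m + 1)
      have e3 : m + 2 + 1 = m + 3 := by ring
      rw [e1, hrec (m + n + 1), ← e2, ih2 n, ih1 n, e3, hm3]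
      have e4 : m + 1 + 1 = m + 2 := rfl
      rw [e4]
      linear_combination (-(Q * U n)) * hrec m
  -- consecutive terms are coprime
  have cop : ∀ n, Int.gcd (U n) (U (n + 1)) = 1 := by
    intro n
    induction n with
    | zero => simp [h0, h1]
    | succ k ih =>
      have : P * U (k + 1) + Q * U k = Q * U k + U (k + 1) * P := by ring
      rw [hrec k, this, igcd_add_mul, hgcdQ, Int.gcd_comm]
      exact ih
  -- gcd step: gcd (U (m+n)) (U n) = gcd (U m) (U n)
  have step : ∀ m n, Int.gcd (U (m + n)) (U n) = Int.gcd (U m) (U n) := by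
    intro m n
    cases n with
    | zero => rfl
    | succ k =>
      have e : m + (k + 1) = m + k + 1 := rfl
      rw [e, key m k, Int.gcd_comm _ (U (k + 1)), Int.gcd_comm (U m) (U (k + 1))]
      have : U (m + 1) * U (k + 1) + Q * U m * U k
          = Q * (U m * U k) + U (k + 1) * U (m + 1) := by ring
      rw [this, igcd_add_mul, hgcdQ, Int.gcd_def, Int.gcd_def, Int.natAbs_mul]
      have hc : Nat.Coprime (U k).natAbs (U (k + 1)).natAbs := by
        have := cop k
        rwa [Int.gcd_def] at this
      exact Nat.Coprime.gcd_mul_right_cancel_right _ hc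
  -- iterate
  have iter : ∀ q r n, Int.gcd (U (r + n * q)) (U n) = Int.gcd (U r) (U n) := by
    intro q
    induction q with
    | zero => intro r n; simp
    | succ k ih =>
      intro r n
      have e : r + n * (k + 1) = (r + n * k) + n := by ring
      rw [e, step (r + n * k) n]
      exact ih r n
  have main : ∀ a b, Int.gcd (U a) (U b) = (U (Nat.gcd a b)).natAbs := by
    intro a b
    induction a, b using Nat.gcd.induction with
    | H0 n => simp [h0, Int.gcd]
    | H1 m n hm ih =>
      have hd : n = n % m + m * (n / m) := (Nat.mod_add_div n m).symm
      rw [Int.gcd_comm, Nat.gcd_comm]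
      calc Int.gcd (U n) (U m) = Int.gcd (U (n % m + m * (n / m))) (U m) := by rw [← hd]
      _ = Int.gcd (U (n % m)) (U m) := iter (n / m) (n % m) m
      _ = (U (Nat.gcd (n % m) m)).natAbs := ih
      _ = (U (Nat.gcd n m)).natAbs := by rw [← Nat.gcd_rec m n, Nat.gcd_comm]
  intro a b _ _
  exact main a b
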